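/- arXiv:1101.3879 — 2 statements merged into one kernel-verified Lean document; each statement's English description precedes it below -/
import Mathlib

section
/- Let E be a real Banach space ordered by a closed convex cone C = { x ∈ E : 0 ≤ x } with C ∩ (−C) = {0} and nonempty topological interior, and let K₁, K₂ : E → E be compact bounded linear operators such that K₁ is strongly positive and K₂ − K₁ is strongly positive (an operator T is strongly positive if T x lies in the interior of C for every x ∈ C \ {0}). If η > 0 is such that the spectral radius of η K₂ equals 1, then the operator id_E − η K₁ is invertible in the bounded linear operators on E. -/
open Filter Topology

set_option maxHeartbeats 1000000
set_option synthInstance.maxHeartbeats 1000000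

section Aux

variable {E : Type*} [NormedAddCommGroup E] [NormedSpace ℝ E] [CompleteSpace E]

lemma aux_cone_add (C : Set E) (hCconvex : Convex ℝ C)
    (hCcone : ∀ x ∈ C, ∀ t : ℝ, 0 ≤ t → t • x ∈ C)
    {a b : E} (ha : a ∈ C) (hb : b ∈ C) : a + b ∈ C := by
  have h : (1/2 : ℝ) • a + (1/2 : ℝ) • b ∈ C :=
    hCconvex ha hb (by norm_num) (by norm_num) (by norm_num)
  have h2 := hCcone _ h 2 (by norm_num)
  have : (2:ℝ) • ((1/2 : ℝ) • a + (1/2 : ℝ) • b) = a + b := by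
    rw [smul_add, smul_smul, smul_smul]; norm_num
  rwa [this] at h2

lemma aux_pow_pos (C : Set E) (T : E →L[ℝ] E) (hT : ∀ x ∈ C, T x ∈ C) :
    ∀ n : ℕ, ∀ x ∈ C, (T ^ n) x ∈ C := by
  intro n
  induction n with
  | zero => intro x hx; simpa using hx
  | succ n ih =>
    intro x hx
    rw [pow_succ, ContinuousLinearMap.mul_apply]
    exact ih _ (hT x hx)

lemma aux_mem_of_hasSum (C : Set E) (hCclosed : IsClosed C) (h0 : (0:E) ∈ C)
    (hadd : ∀ {a b : E}, a ∈ C → b ∈ C → a + b ∈ C)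
    {f : ℕ → E} {s : E} (hf : HasSum f s) (hmem : ∀ n, f n ∈ C) : s ∈ C := by
  refine hCclosed.mem_of_tendsto hf.tendsto_sum_nat (Filter.Eventually.of_forall fun n => ?_)
  induction n with
  | zero => simpa using h0
  | succ n ih => rw [Finset.sum_range_succ]; exact hadd ih (hmem n)

lemma aux_inverse_decomp (v u a : E →L[ℝ] E) (hv : IsUnit v) (hu : ‖u‖ < 1)
    (heq : a = v * (1 - u)) :
    IsUnit a ∧ Ring.inverse a = (↑(Units.oneSub u hu)⁻¹ : E →L[ℝ] E) * Ring.inverse v := by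
  have ha : a = ↑(hv.unit * Units.oneSub u hu) := by
    rw [heq, Units.val_mul, IsUnit.unit_spec]
    rfl
  refine ⟨ha ▸ (hv.unit * Units.oneSub u hu).isUnit, ?_⟩
  rw [ha, Ring.inverse_unit, mul_inv_rev, Units.val_mul]
  have h2 : Ring.inverse v = (↑hv.unit⁻¹ : E →L[ℝ] E) := by
    conv_lhs => rw [← hv.unit_spec]
    exact Ring.inverse_unit hv.unit
  rw [h2]

lemma aux_geom_apply_mem (C : Set E) (hCclosed : IsClosed C) (h0 : (0:E) ∈ C)
    (hadd : ∀ {a b : E}, a ∈ C → b ∈ C → a + b ∈ C)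
    {u : E →L[ℝ] E} (hu : ‖u‖ < 1) (hpow : ∀ n : ℕ, ∀ x ∈ C, (u ^ n) x ∈ C)
    {y : E} (hy : y ∈ C) : (↑(Units.oneSub u hu)⁻¹ : E →L[ℝ] E) y ∈ C := by
  have h1 : (Ring.inverse (1 - u) : E →L[ℝ] E) = ↑(Units.oneSub u hu)⁻¹ :=
    NormedRing.inverse_one_sub u hu
  have hs : HasSum (fun i : ℕ => (u ^ i) y) ((Ring.inverse (1 - u) : E →L[ℝ] E) y) := by
    have := (hasSum_geom_series_inverse u hu).mapL (ContinuousLinearMap.apply ℝ E y)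
    simpa using this
  rw [h1] at hs
  exact aux_mem_of_hasSum C hCclosed h0 hadd hs fun n => hpow n y hy

lemma aux_sub_decomp (T : E →L[ℝ] E) {s t : ℝ} (hs : IsUnit (s • (1:E →L[ℝ] E) - T)) :
    t • (1:E →L[ℝ] E) - T =
      (s • (1:E →L[ℝ] E) - T) *
        (1 - (s - t) • Ring.inverse (s • (1:E →L[ℝ] E) - T)) := by
  rw [mul_sub, mul_one, mul_smul_comm, Ring.mul_inverse_cancel _ hs, sub_smul]
  abel

lemma aux_decomp_pos (C : Set E) (hCclosed : IsClosed C) (h0 : (0:E) ∈ C)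
    (hadd : ∀ {a b : E}, a ∈ C → b ∈ C → a + b ∈ C)
    (v u a : E →L[ℝ] E) (hv : IsUnit v) (hu : ‖u‖ < 1)
    (heq : a = v * (1 - u))
    (hvpos : ∀ x ∈ C, Ring.inverse v x ∈ C)
    (hupos : ∀ x ∈ C, u x ∈ C) :
    ∀ x ∈ C, Ring.inverse a x ∈ C := by
  obtain ⟨hua, hinv⟩ := aux_inverse_decomp v u a hv hu heq
  intro x hx
  rw [hinv, ContinuousLinearMap.mul_apply]
  exact aux_geom_apply_mem C hCclosed h0 hadd hu (aux_pow_pos C u hupos) (hvpos x hx)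

lemma aux_resolvent_pos (C : Set E) (hCclosed : IsClosed C) (h0 : (0:E) ∈ C)
    (hadd : ∀ {a b : E}, a ∈ C → b ∈ C → a + b ∈ C)
    (hCcone : ∀ x ∈ C, ∀ t : ℝ, 0 ≤ t → t • x ∈ C)
    (T : E →L[ℝ] E) (hT : ∀ x ∈ C, T x ∈ C)
    {c : ℝ} (hinv : ∀ t : ℝ, c < t → IsUnit (t • (1:E →L[ℝ] E) - T))
    {τ : ℝ} (hτ : c < τ) :
    ∀ x ∈ C, Ring.inverse (τ • (1:E →L[ℝ] E) - T) x ∈ C := by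
  set M := max τ (‖T‖ + 1) with hMdef
  have hMT : ‖T‖ < M := lt_of_lt_of_le (lt_add_one _) (le_max_right _ _)
  have hM0 : 0 < M := lt_of_le_of_lt (norm_nonneg T) hMT
  have hτM : τ ≤ M := le_max_left _ _
  set F : Set ℝ := {t : ℝ | t ∈ Set.Icc τ M ∧
    ∀ x ∈ C, Ring.inverse (t • (1:E →L[ℝ] E) - T) x ∈ C} with hFdef
  -- M ∈ F
  have hMunitval : (M • (1:E →L[ℝ] E)) * (M⁻¹ • (1:E →L[ℝ] E)) = 1 := by
    rw [smul_mul_assoc, one_mul, smul_smul, mul_inv_cancel₀ hM0.ne', one_smul]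
  have hMunitval' : (M⁻¹ • (1:E →L[ℝ] E)) * (M • (1:E →L[ℝ] E)) = 1 := by
    rw [smul_mul_assoc, one_mul, smul_smul, inv_mul_cancel₀ hM0.ne', one_smul]
  set wv : (E →L[ℝ] E)ˣ :=
    ⟨M • (1:E →L[ℝ] E), M⁻¹ • (1:E →L[ℝ] E), hMunitval, hMunitval'⟩ with hwv
  have hwvinv : Ring.inverse (M • (1:E →L[ℝ] E)) = M⁻¹ • (1:E →L[ℝ] E) :=
    Ring.inverse_unit wv
  have huM : ‖M⁻¹ • T‖ < 1 := by
    rw [norm_smul M⁻¹ T, Real.norm_eq_abs, abs_of_pos (inv_pos.mpr hM0)]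
    rw [inv_mul_lt_iff₀ hM0, mul_one]
    exact hMT
  have heqM : M • (1:E →L[ℝ] E) - T = (M • (1:E →L[ℝ] E)) * (1 - M⁻¹ • T) := by
    rw [mul_sub, mul_one]
    congr 1
    rw [smul_mul_assoc, one_mul, smul_smul, mul_inv_cancel₀ hM0.ne', one_smul]
  have hMF : M ∈ F := by
    refine ⟨⟨hτM, le_refl M⟩, ?_⟩
    refine aux_decomp_pos C hCclosed h0 @hadd _ _ _ wv.isUnit huM heqM ?_ ?_
    · intro x hx
      rw [hwvinv]
      simpa using hCcone x hx M⁻¹ (inv_nonneg.mpr hM0.le)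
    · intro x hx
      simpa using hCcone _ (hT x hx) M⁻¹ (inv_nonneg.mpr hM0.le)
  -- F is closed
  have hFclosed : IsClosed F := by
    apply IsSeqClosed.isClosed
    intro f t hfF hft
    have htIcc : t ∈ Set.Icc τ M :=
      isClosed_Icc.mem_of_tendsto hft (Eventually.of_forall fun n => (hfF n).1)
    refine ⟨htIcc, fun x hx => ?_⟩
    have hunit : IsUnit (t • (1:E →L[ℝ] E) - T) := hinv t (lt_of_lt_of_le hτ htIcc.1)
    have h1 : Continuous (fun s : ℝ => s • (1:E →L[ℝ] E) - T) :=
      (continuous_id.smul continuous_const).sub continuous_const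
    have h2 := NormedRing.inverse_continuousAt hunit.unit
    rw [IsUnit.unit_spec] at h2
    have h3 : Tendsto (fun s : ℝ => Ring.inverse (s • (1:E →L[ℝ] E) - T)) (𝓝 t)
        (𝓝 (Ring.inverse (t • (1:E →L[ℝ] E) - T))) := h2.tendsto.comp (h1.tendsto t)
    have h4 : Tendsto (fun s : ℝ => Ring.inverse (s • (1:E →L[ℝ] E) - T) x) (𝓝 t)
        (𝓝 (Ring.inverse (t • (1:E →L[ℝ] E) - T) x)) := by
      have := ((ContinuousLinearMap.apply ℝ E x).continuous.tendsto _).comp h3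
      simpa [Function.comp_def] using this
    exact hCclosed.mem_of_tendsto (h4.comp hft)
      (Eventually.of_forall fun n => (hfF n).2 x hx)
  have hFne : F.Nonempty := ⟨M, hMF⟩
  have hFbdd : BddBelow F := ⟨τ, fun t ht => ht.1.1⟩
  have hσF : sInf F ∈ F := hFclosed.csInf_mem hFne hFbdd
  have hτF : τ ∈ F := by
    rcases eq_or_lt_of_le hσF.1.1 with h | h
    · exact h ▸ hσF
    · exfalso
      set σ := sInf F with hσdef
      set R := Ring.inverse (σ • (1:E →L[ℝ] E) - T) with hRdef
      set δ : ℝ := (2 * (‖R‖ + 1))⁻¹ with hδdef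
      have hδpos : 0 < δ := by positivity
      set t := max τ (σ - δ) with htdef
      have htσ : t < σ := max_lt h (by linarith)
      have hτt : τ ≤ t := le_max_left _ _
      have hst : σ - t ≤ δ := by
        have h5 : σ - δ ≤ t := le_max_right _ _
        linarith
      have hst0 : 0 ≤ σ - t := by linarith
      have hsunit : IsUnit (σ • (1:E →L[ℝ] E) - T) := hinv σ (lt_of_lt_of_le hτ hσF.1.1)
      have hu : ‖(σ - t) • R‖ < 1 := by
        rw [norm_smul (σ - t) R, Real.norm_eq_abs, abs_of_nonneg hst0]
        have h1 : (σ - t) * ‖R‖ ≤ δ * ‖R‖ :=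
          mul_le_mul_of_nonneg_right hst (norm_nonneg R)
        have h2 : δ * ‖R‖ < 1 := by
          rw [hδdef]
          rw [inv_mul_lt_iff₀ (by positivity)]
          nlinarith [norm_nonneg R]
        linarith
      have hpos : ∀ x ∈ C, Ring.inverse (t • (1:E →L[ℝ] E) - T) x ∈ C := by
        refine aux_decomp_pos C hCclosed h0 @hadd _ _ _ hsunit hu
          (aux_sub_decomp T hsunit) hσF.2 ?_
        intro x hx
        rw [ContinuousLinearMap.smul_apply]
        exact hCcone _ (hσF.2 x hx) _ hst0
      have htF : t ∈ F := ⟨⟨hτt, le_trans htσ.le hσF.1.2⟩, hpos⟩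
      exact absurd (csInf_le hFbdd htF) (not_le.mpr htσ)
  exact hτF.2

end Aux

/-- Let `E` be a real Banach space ordered by a closed convex cone `C`
with `C ∩ (-C) = {0}` and nonempty interior, and let `K₁, K₂` be compact bounded linear
operators on `E` such that `K₁` is strongly positive and `K₂ - K₁` is strongly positive.
If `η > 0` is such that the spectral radius of `η • K₂` equals `1`, then `id - η • K₁` is
invertible in the bounded linear operators on `E`. -/
theorem stmt_5
    {E : Type*} [NormedAddCommGroup E] [NormedSpace ℝ E] [CompleteSpace E]
    (C : Set E) (hCclosed : IsClosed C) (hCconvex : Convex ℝ C)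
    (hCcone : ∀ x ∈ C, ∀ t : ℝ, 0 ≤ t → t • x ∈ C)
    (hCpointed : C ∩ (-C) = {0})
    (hCint : (interior C).Nonempty)
    (K₁ K₂ : E →L[ℝ] E)
    (hK₁compact : IsCompactOperator (K₁ : E → E))
    (hK₂compact : IsCompactOperator (K₂ : E → E))
    (hK₁pos : ∀ x ∈ C, x ≠ 0 → K₁ x ∈ interior C)
    (hdiffpos : ∀ x ∈ C, x ≠ 0 → (K₂ - K₁) x ∈ interior C)
    (η : ℝ) (hη : 0 < η)
    (hr : spectralRadius ℝ (η • K₂) = 1) :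
    IsUnit ((1 : E →L[ℝ] E) - η • K₁) := by
  rcases subsingleton_or_nontrivial E with hE | hE
  · have h1 : (1 : E →L[ℝ] E) - η • K₁ = 1 := Subsingleton.elim _ _
    rw [h1]; exact isUnit_one
  by_contra hcon
  -- basic cone facts
  have h0C : (0:E) ∈ C := by
    have h : (0:E) ∈ C ∩ (-C) := by rw [hCpointed]; exact Set.mem_singleton _
    exact h.1
  have hadd : ∀ {a b : E}, a ∈ C → b ∈ C → a + b ∈ C :=
    fun ha hb => aux_cone_add C hCconvex hCcone ha hb
  -- interior of the cone is stable under positive scaling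
  have hscal : ∀ t : ℝ, 0 < t → ∀ x ∈ interior C, t • x ∈ interior C := by
    intro t ht x hx
    obtain ⟨ε, hε, hball⟩ := Metric.mem_nhds_iff.mp (mem_interior_iff_mem_nhds.mp hx)
    rw [mem_interior_iff_mem_nhds, Metric.mem_nhds_iff]
    refine ⟨t * ε, by positivity, fun z hz => ?_⟩
    have hz' : t⁻¹ • z ∈ Metric.ball x ε := by
      rw [Metric.mem_ball] at hz ⊢
      have h1 : t⁻¹ • z - x = t⁻¹ • (z - t • x) := by
        rw [smul_sub, smul_smul, inv_mul_cancel₀ ht.ne', one_smul]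
      rw [dist_eq_norm, h1, norm_smul t⁻¹ (z - t • x), Real.norm_eq_abs,
        abs_of_pos (inv_pos.mpr ht)]
      rw [dist_eq_norm] at hz
      calc t⁻¹ * ‖z - t • x‖ < t⁻¹ * (t * ε) := by
            apply mul_lt_mul_of_pos_left hz (inv_pos.mpr ht)
        _ = ε := by field_simp
    have hmem := hball hz'
    have hzz : z = t • (t⁻¹ • z) := by rw [smul_smul, mul_inv_cancel₀ ht.ne', one_smul]
    rw [hzz]
    exact hCcone _ hmem t ht.le
  -- the operators
  set A : E →L[ℝ] E := η • K₁ with hAdef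
  set B : E →L[ℝ] E := η • K₂ with hBdef
  have hAint : ∀ x ∈ C, x ≠ 0 → A x ∈ interior C := by
    intro x hx hx0
    have : A x = η • K₁ x := by rw [hAdef]; rfl
    rw [this]
    exact hscal η hη _ (hK₁pos x hx hx0)
  have hApos : ∀ x ∈ C, A x ∈ C := by
    intro x hx
    by_cases hx0 : x = 0
    · rw [hx0, map_zero]; exact h0C
    · exact interior_subset (hAint x hx hx0)
  have hBAint : ∀ x ∈ C, x ≠ 0 → B x - A x ∈ interior C := by
    intro x hx hx0
    have h1 : B x - A x = η • ((K₂ - K₁) x) := by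
      rw [hBdef, hAdef]
      rw [ContinuousLinearMap.smul_apply, ContinuousLinearMap.smul_apply,
        ContinuousLinearMap.sub_apply, smul_sub]
    rw [h1]
    exact hscal η hη _ (hdiffpos x hx hx0)
  have hBpos : ∀ x ∈ C, B x ∈ C := by
    intro x hx
    by_cases hx0 : x = 0
    · rw [hx0, map_zero]; exact h0C
    · have h1 : B x = A x + (B x - A x) := by abel
      rw [h1]
      exact hadd (hApos x hx) (interior_subset (hBAint x hx hx0))
  -- 1 belongs to the real spectrum of A
  have h1spec : (1:ℝ) ∈ spectrum ℝ A := by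
    rw [spectrum.mem_iff, map_one]
    exact hcon
  have hspec_cpt : IsCompact (spectrum ℝ A) := spectrum.isCompact A
  set t₀ : ℝ := sSup (spectrum ℝ A) with ht₀def
  have ht₀mem : t₀ ∈ spectrum ℝ A := hspec_cpt.sSup_mem ⟨1, h1spec⟩
  have ht₀ge : (1:ℝ) ≤ t₀ := le_csSup hspec_cpt.bddAbove h1spec
  have hinvA : ∀ t : ℝ, t₀ < t → IsUnit (t • (1:E →L[ℝ] E) - A) := by
    intro t ht
    have h1 : t ∉ spectrum ℝ A :=
      fun hmem => absurd (le_csSup hspec_cpt.bddAbove hmem) (not_le.mpr ht)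
    have h2 := spectrum.notMem_iff.mp h1
    rwa [Algebra.algebraMap_eq_smul_one] at h2
  -- resolvent norm blow-up near t₀
  have hblow : ∀ n : ℕ, ∃ t : ℝ, t₀ < t ∧ t < t₀ + ((n:ℝ)+1)⁻¹ ∧
      ((n:ℝ)+1) < ‖Ring.inverse (t • (1:E →L[ℝ] E) - A)‖ := by
    intro n
    by_contra hno
    push_neg at hno
    set δ : ℝ := (2*((n:ℝ)+2))⁻¹ with hδdef
    have hδpos : 0 < δ := by positivity
    have hδlt : δ < ((n:ℝ)+1)⁻¹ := by
      rw [hδdef]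
      apply inv_strictAnti₀ (by positivity)
      nlinarith [Nat.cast_nonneg (α := ℝ) n]
    set s : ℝ := t₀ + δ with hsdef
    have hs : IsUnit (s • (1:E →L[ℝ] E) - A) := hinvA s (by rw [hsdef]; linarith)
    have hRs : ‖Ring.inverse (s • (1:E →L[ℝ] E) - A)‖ ≤ (n:ℝ)+1 :=
      hno s (by rw [hsdef]; linarith) (by rw [hsdef]; linarith)
    have hu : ‖(s - t₀) • Ring.inverse (s • (1:E →L[ℝ] E) - A)‖ < 1 := by
      rw [norm_smul (s - t₀) (Ring.inverse (s • (1:E →L[ℝ] E) - A)), Real.norm_eq_abs,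
        abs_of_pos (by rw [hsdef]; linarith : (0:ℝ) < s - t₀)]
      have h1 : s - t₀ = δ := by rw [hsdef]; ring
      rw [h1, hδdef]
      rw [inv_mul_lt_iff₀ (by positivity)]
      nlinarith [norm_nonneg (Ring.inverse (s • (1:E →L[ℝ] E) - A)), Nat.cast_nonneg (α := ℝ) n]
    have hdec := aux_inverse_decomp _ _ _ hs hu (aux_sub_decomp A hs)
    have hUnit : IsUnit (t₀ • (1:E →L[ℝ] E) - A) := hdec.1
    have hnot : t₀ ∉ spectrum ℝ A :=
      spectrum.notMem_iff.mpr (by rwa [Algebra.algebraMap_eq_smul_one])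
    exact hnot ht₀mem
  choose ts hts1 hts2 hts3 using hblow
  set R : ℕ → (E →L[ℝ] E) := fun n => Ring.inverse (ts n • (1:E →L[ℝ] E) - A) with hRdef
  -- order unit
  obtain ⟨u₀, hu₀⟩ := hCint
  obtain ⟨ε₀, hε₀pos, hball₀⟩ := Metric.mem_nhds_iff.mp (mem_interior_iff_mem_nhds.mp hu₀)
  set ρ : ℝ := ε₀/2 with hρdef
  have hρpos : 0 < ρ := by positivity
  have hρu : ∀ z : E, ‖z‖ ≤ ρ → u₀ + z ∈ C := by
    intro z hz
    apply hball₀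
    rw [Metric.mem_ball, dist_eq_norm]
    have : u₀ + z - u₀ = z := by abel
    rw [this]
    linarith
  have hu₀C : u₀ ∈ C := interior_subset hu₀
  -- unit sphere vectors where the resolvent is large
  have hxn : ∀ n : ℕ, ∃ x : E, ‖x‖ = 1 ∧ ((n:ℝ)+1)/2 < ‖R n x‖ := by
    intro n
    by_contra hno
    push_neg at hno
    have hb : ‖R n‖ ≤ ((n:ℝ)+1)/2 := by
      apply ContinuousLinearMap.opNorm_le_bound _ (by positivity)
      intro x
      by_cases hx0 : x = 0
      · simp [hx0]
      · have hxn0 : ‖x‖ ≠ 0 := norm_ne_zero_iff.mpr hx0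
        have h1 : ‖(‖x‖⁻¹ • x : E)‖ = 1 := by
          rw [norm_smul ‖x‖⁻¹ x, Real.norm_eq_abs, abs_of_pos (by positivity)]
          field_simp
        have h2 := hno (‖x‖⁻¹ • x) h1
        rw [map_smul, norm_smul ‖x‖⁻¹ (R n x), Real.norm_eq_abs,
          abs_of_pos (by positivity : (0:ℝ) < ‖x‖⁻¹)] at h2
        calc ‖R n x‖ = ‖x‖ * (‖x‖⁻¹ * ‖R n x‖) := by field_simp
          _ ≤ ‖x‖ * (((n:ℝ)+1)/2) := by
              apply mul_le_mul_of_nonneg_left h2 (norm_nonneg x)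
          _ = ((n:ℝ)+1)/2 * ‖x‖ := by ring
    have := lt_of_lt_of_le (hts3 n) hb
    nlinarith [Nat.cast_nonneg (α := ℝ) n]
  choose xs hxs1 hxs2 using hxn
  -- positive vectors where the resolvent is large
  have hdn : ∀ n : ℕ, ∃ d : E, d ∈ C ∧ ‖d‖ ≤ ‖u₀‖ + ρ ∧ ρ*((n:ℝ)+1)/4 ≤ ‖R n d‖ := by
    intro n
    set cc : E := u₀ + ρ • xs n with hccdef
    have hccC : cc ∈ C := by
      apply hρu
      rw [norm_smul ρ (xs n), Real.norm_eq_abs, abs_of_pos hρpos, hxs1 n, mul_one]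
    have hccnorm : ‖cc‖ ≤ ‖u₀‖ + ρ := by
      calc ‖cc‖ ≤ ‖u₀‖ + ‖ρ • xs n‖ := norm_add_le _ _
        _ = ‖u₀‖ + ρ := by
            rw [norm_smul ρ (xs n), Real.norm_eq_abs, abs_of_pos hρpos, hxs1 n, mul_one]
    have hsum : ρ * ((n:ℝ)+1)/2 ≤ ‖R n cc‖ + ‖R n u₀‖ := by
      have h1 : R n (ρ • xs n) = R n cc - R n u₀ := by
        rw [hccdef, map_add]; abel
      have h2 : ρ * ‖R n (xs n)‖ ≤ ‖R n cc‖ + ‖R n u₀‖ := by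
        have h3 : ‖R n (ρ • xs n)‖ ≤ ‖R n cc‖ + ‖R n u₀‖ := by
          rw [h1]; exact norm_sub_le _ _
        rw [map_smul, norm_smul ρ (R n (xs n)), Real.norm_eq_abs, abs_of_pos hρpos] at h3
        exact h3
      nlinarith [hxs2 n, hρpos.le]
    rcases le_or_gt (‖R n cc‖) (‖R n u₀‖) with hcase | hcase
    · exact ⟨u₀, hu₀C, by linarith, by linarith⟩
    · exact ⟨cc, hccC, hccnorm, by linarith⟩
  choose d hd1 hd2 hd3 using hdn
  set Mq : ℕ → ℝ := fun n => ‖R n (d n)‖ with hMqdef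
  have hMqpos : ∀ n, 0 < Mq n := by
    intro n
    have := hd3 n
    have h1 : (0:ℝ) < ρ*((n:ℝ)+1)/4 := by positivity
    linarith
  set vv : ℕ → E := fun n => (Mq n)⁻¹ • R n (d n) with hvvdef
  have hvvC : ∀ n, vv n ∈ C := by
    intro n
    apply hCcone _ _ _ (inv_nonneg.mpr (hMqpos n).le)
    -- R n (d n) ∈ C by resolvent positivity
    exact aux_resolvent_pos C hCclosed h0C @hadd hCcone A hApos hinvA (hts1 n) (d n) (hd1 n)
  have hvvnorm : ∀ n, ‖vv n‖ = 1 := by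
    intro n
    rw [hvvdef]
    simp only []
    rw [norm_smul (Mq n)⁻¹ (R n (d n)), Real.norm_eq_abs,
      abs_of_pos (inv_pos.mpr (hMqpos n))]
    rw [inv_mul_eq_div]
    exact div_self (ne_of_gt (hMqpos n))
  have hts0 : ∀ n, (0:ℝ) < ts n :=
    fun n => lt_of_le_of_lt (by linarith : (0:ℝ) ≤ t₀) (hts1 n)
  have hAvv : ∀ n, A (vv n) = ts n • vv n - (Mq n)⁻¹ • d n := by
    intro n
    have h1 : (ts n • (1:E →L[ℝ] E) - A) * R n = 1 :=
      Ring.mul_inverse_cancel _ (hinvA (ts n) (hts1 n))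
    have h2 : ((ts n • (1:E →L[ℝ] E) - A) * R n) (d n) = (1 : E →L[ℝ] E) (d n) := by
      rw [h1]
    rw [ContinuousLinearMap.mul_apply, ContinuousLinearMap.sub_apply,
      ContinuousLinearMap.smul_apply, ContinuousLinearMap.one_apply,
      ContinuousLinearMap.one_apply] at h2
    have h4 : A (R n (d n)) = ts n • (R n (d n)) - d n := by
      have h5 := sub_eq_iff_eq_add.mp h2
      rw [h5]; abel
    show A ((Mq n)⁻¹ • R n (d n)) = ts n • ((Mq n)⁻¹ • R n (d n)) - (Mq n)⁻¹ • d n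
    rw [map_smul, h4, smul_sub]
    rw [smul_comm (Mq n)⁻¹ (ts n) (R n (d n))]
  -- compactness of A
  have hAcomp : IsCompactOperator (⇑A) := by
    have h1 : IsCompactOperator (η • ⇑K₁) := hK₁compact.smul η
    have h2 : ⇑A = η • ⇑K₁ := by rw [hAdef]; exact ContinuousLinearMap.coe_smul' η K₁
    rwa [h2]
  have hAcomp' : IsCompactOperator ⇑(A : E →ₗ[ℝ] E) := by
    rwa [ContinuousLinearMap.coe_coe]
  obtain ⟨Kc, hKc, hKsub⟩ :=
    IsCompactOperator.image_closedBall_subset_compact (f := (A : E →ₗ[ℝ] E)) hAcomp' 1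
  have hAvvK : ∀ n, A (vv n) ∈ Kc := by
    intro n
    apply hKsub
    refine ⟨vv n, ?_, rfl⟩
    rw [Metric.mem_closedBall, dist_zero_right, hvvnorm n]
  obtain ⟨z, hzK, φ, hφmono, hφconv⟩ := hKc.tendsto_subseq hAvvK
  have hts_to : Tendsto ts atTop (𝓝 t₀) := by
    have hup : Tendsto (fun n : ℕ => t₀ + ((n:ℝ)+1)⁻¹) atTop (𝓝 (t₀ + 0)) := by
      apply Tendsto.const_add
      simpa only [one_div] using tendsto_one_div_add_atTop_nhds_zero_nat (𝕜 := ℝ)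
    rw [add_zero] at hup
    exact tendsto_of_tendsto_of_tendsto_of_le_of_le tendsto_const_nhds hup
      (fun n => (hts1 n).le) (fun n => (hts2 n).le)
  have hrem_to : Tendsto (fun n => (Mq n)⁻¹ • d n) atTop (𝓝 0) := by
    apply squeeze_zero_norm (a := fun n : ℕ => (ρ*((n:ℝ)+1)/4)⁻¹ * (‖u₀‖ + ρ))
    · intro n
      rw [norm_smul (Mq n)⁻¹ (d n), Real.norm_eq_abs, abs_of_pos (inv_pos.mpr (hMqpos n))]
      have hb1 : (Mq n)⁻¹ ≤ (ρ*((n:ℝ)+1)/4)⁻¹ :=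
        inv_anti₀ (by positivity) (hd3 n)
      exact mul_le_mul hb1 (hd2 n) (norm_nonneg _) (by positivity)
    · have h1 : (fun n : ℕ => (ρ*((n:ℝ)+1)/4)⁻¹ * (‖u₀‖ + ρ))
          = fun n : ℕ => ((4/ρ) * (‖u₀‖ + ρ)) * ((n:ℝ)+1)⁻¹ := by
        funext n
        have hn1 : ((n:ℝ)+1) ≠ 0 := by positivity
        field_simp
        try ring
      rw [h1]
      have h2 : Tendsto (fun n : ℕ => ((n:ℝ)+1)⁻¹) atTop (𝓝 0) := by
        simpa only [one_div] using tendsto_one_div_add_atTop_nhds_zero_nat (𝕜 := ℝ)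
      simpa using h2.const_mul ((4/ρ) * (‖u₀‖ + ρ))
  have ht₀0 : (0:ℝ) < t₀ := lt_of_lt_of_le one_pos ht₀ge
  set v : E := t₀⁻¹ • z with hvdef
  have hvv_eq : ∀ n, vv n = (ts n)⁻¹ • (A (vv n) + (Mq n)⁻¹ • d n) := by
    intro n
    rw [hAvv n, sub_add_cancel, smul_smul, inv_mul_cancel₀ (hts0 n).ne', one_smul]
  have hvv_to : Tendsto (fun n => vv (φ n)) atTop (𝓝 v) := by
    have h1 : Tendsto (fun n => (ts (φ n))⁻¹) atTop (𝓝 t₀⁻¹) :=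
      ((hts_to.comp hφmono.tendsto_atTop).inv₀ ht₀0.ne')
    have h2 : Tendsto (fun n => A (vv (φ n)) + (Mq (φ n))⁻¹ • d (φ n)) atTop (𝓝 (z + 0)) :=
      hφconv.add (hrem_to.comp hφmono.tendsto_atTop)
    rw [add_zero] at h2
    have h3 := h1.smul h2
    have h4 : (fun n => (ts (φ n))⁻¹ • (A (vv (φ n)) + (Mq (φ n))⁻¹ • d (φ n)))
        = fun n => vv (φ n) := by
      funext n; rw [← hvv_eq (φ n)]
    rw [h4] at h3
    exact h3
  have hvC : v ∈ C :=
    hCclosed.mem_of_tendsto hvv_to (Eventually.of_forall fun n => hvvC (φ n))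
  have hvnorm : ‖v‖ = 1 := by
    have h1 : Tendsto (fun n => ‖vv (φ n)‖) atTop (𝓝 ‖v‖) := hvv_to.norm
    have h2 : (fun n => ‖vv (φ n)‖) = fun _ => (1:ℝ) := funext fun n => hvvnorm (φ n)
    rw [h2] at h1
    exact (tendsto_nhds_unique tendsto_const_nhds h1).symm
  have hvne : v ≠ 0 := by
    intro h; rw [h, norm_zero] at hvnorm; exact one_ne_zero hvnorm.symm
  have hzv : z = t₀ • v := by
    rw [hvdef, smul_smul, mul_inv_cancel₀ ht₀0.ne', one_smul]
  have hAv : A v = t₀ • v := by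
    have h1 : Tendsto (fun n => A (vv (φ n))) atTop (𝓝 (A v)) :=
      (A.continuous.tendsto v).comp hvv_to
    have h2 := tendsto_nhds_unique h1 hφconv
    rw [h2, hzv]
  -- strict domination : B v - (t₀ + ε) v ∈ C
  obtain ⟨ε₁, hε₁pos, hball₁⟩ := Metric.mem_nhds_iff.mp
    (mem_interior_iff_mem_nhds.mp (hBAint v hvC hvne))
  set ε : ℝ := ε₁/2 with hεdef
  have hεpos : 0 < ε := by positivity
  have hdom : B v - (t₀ + ε) • v ∈ C := by
    have h1 : B v - (t₀ + ε) • v = (B v - A v) + (-(ε • v)) := by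
      rw [hAv, add_smul]; abel
    rw [h1]
    apply hball₁
    rw [Metric.mem_ball, dist_eq_norm]
    have h2 : B v - A v + -(ε • v) - (B v - A v) = -(ε • v) := by abel
    rw [h2, norm_neg, norm_smul ε v, Real.norm_eq_abs, abs_of_pos hεpos, hvnorm, mul_one]
    rw [hεdef]; linarith
  -- invertibility of s - B for s > 1, with positive inverse
  have hinvB : ∀ s : ℝ, 1 < s → IsUnit (s • (1:E →L[ℝ] E) - B) := by
    intro s hs
    have h1 : spectralRadius ℝ B < ‖s‖₊ := by
      rw [hr]
      have h2 : (1:ℝ) < ‖s‖ := by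
        rw [Real.norm_eq_abs, abs_of_pos (by linarith : (0:ℝ) < s)]
        exact hs
      exact_mod_cast h2
    have h3 := spectrum.mem_resolventSet_of_spectralRadius_lt h1
    rw [resolventSet, Set.mem_setOf_eq] at h3
    rwa [Algebra.algebraMap_eq_smul_one] at h3
  set t : ℝ := t₀ + ε/2 with htdef
  have ht1 : (1:ℝ) < t := by rw [htdef]; linarith
  have hRBpos : ∀ x ∈ C, Ring.inverse (t • (1:E →L[ℝ] E) - B) x ∈ C :=
    aux_resolvent_pos C hCclosed h0C @hadd hCcone B hBpos hinvB ht1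
  -- conclude v ∈ -C
  have hnegy : -((t • (1:E →L[ℝ] E) - B) v) ∈ C := by
    have h1 : -((t • (1:E →L[ℝ] E) - B) v) = (B v - (t₀ + ε) • v) + (ε/2) • v := by
      rw [ContinuousLinearMap.sub_apply, ContinuousLinearMap.smul_apply,
        ContinuousLinearMap.one_apply, htdef, add_smul, add_smul]
      have hhalf : (ε/2) • v + (ε/2) • v = ε • v := by
        rw [← add_smul]; congr 1; ring
      rw [← hhalf]
      abel
    rw [h1]
    exact hadd hdom (hCcone v hvC (ε/2) (by linarith))
  have hvneg : v ∈ -C := by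
    have h1 : Ring.inverse (t • (1:E →L[ℝ] E) - B) * (t • (1:E →L[ℝ] E) - B) = 1 :=
      Ring.inverse_mul_cancel _ (hinvB t ht1)
    have h2 : Ring.inverse (t • (1:E →L[ℝ] E) - B) ((t • (1:E →L[ℝ] E) - B) v) = v := by
      have h : (Ring.inverse (t • (1:E →L[ℝ] E) - B) * (t • (1:E →L[ℝ] E) - B)) v
          = (1 : E →L[ℝ] E) v := by rw [h1]
      rw [ContinuousLinearMap.mul_apply, ContinuousLinearMap.one_apply] at h
      exact h
    have h3 : -v = Ring.inverse (t • (1:E →L[ℝ] E) - B) (-((t • (1:E →L[ℝ] E) - B) v)) := by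
      rw [map_neg, h2]
    rw [Set.mem_neg]
    rw [h3]
    exact hRBpos _ hnegy
  have hv0 : v = 0 := by
    have h1 : v ∈ C ∩ (-C) := ⟨hvC, hvneg⟩
    rw [hCpointed] at h1
    exact h1
  exact hvne hv0
end

section
/- Let E be a real Banach space and C ⊆ E a closed convex cone. Let T > 0, let f : [0, T] → E be Bochner integrable on [0, T] and continuous on (0, T], with f(a) ∈ C for all a ∈ [0, T] and f(a) in the topological interior of C for all a ∈ (0, T]. Let b : [0, T] → ℝ be measurable, bounded and nonnegative, and suppose there exists δ ∈ (0, T) such that b(a) > 0 for almost every a ∈ (T − δ, T). Then the Bochner integral ∫₀ᵀ b(a) f(a) da belongs to the interior of C. -/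
open MeasureTheory Pointwise

/-- Let `E` be a real Banach space and `C ⊆ E` a closed convex cone.
Let `T > 0`, let `f : [0, T] → E` be Bochner integrable on `[0, T]` and continuous on
`(0, T]`, with `f a ∈ C` for all `a ∈ [0, T]` and `f a ∈ interior C` for all `a ∈ (0, T]`.
Let `b : [0, T] → ℝ` be measurable, bounded and nonnegative, with `b a > 0` for almost
every `a` in some interval `(T - δ, T)` with `0 < δ < T`. Then
`∫₀ᵀ b a • f a da ∈ interior C`. -/
theorem stmt_7
    {E : Type*} [NormedAddCommGroup E] [NormedSpace ℝ E] [CompleteSpace E]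
    (C : Set E) (hCclosed : IsClosed C) (hCconvex : Convex ℝ C)
    (hCadd : ∀ x ∈ C, ∀ y ∈ C, x + y ∈ C)
    (hCsmul : ∀ x ∈ C, ∀ t : ℝ, 0 ≤ t → t • x ∈ C)
    (T : ℝ) (hT : 0 < T)
    (f : ℝ → E)
    (hfint : IntegrableOn f (Set.Icc 0 T) volume)
    (hfcont : ContinuousOn f (Set.Ioc 0 T))
    (hfC : ∀ a ∈ Set.Icc 0 T, f a ∈ C)
    (hfintC : ∀ a ∈ Set.Ioc 0 T, f a ∈ interior C)
    (b : ℝ → ℝ)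
    (hbmeas : AEMeasurable b (volume.restrict (Set.Icc 0 T)))
    (hbbdd : ∃ M : ℝ, ∀ a ∈ Set.Icc 0 T, |b a| ≤ M)
    (hbnonneg : ∀ a ∈ Set.Icc 0 T, 0 ≤ b a)
    (hbpos : ∃ δ : ℝ, 0 < δ ∧ δ < T ∧
      ∀ᵐ a ∂(volume.restrict (Set.Ioo (T - δ) T)), 0 < b a) :
    (∫ a in Set.Icc 0 T, b a • f a) ∈ interior C := by
  obtain ⟨M, hM⟩ := hbbdd
  obtain ⟨δ, hδ0, hδT, hbposδ⟩ := hbpos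
  set x := ∫ a in Set.Icc 0 T, b a • f a with hxdef
  -- integrability of the integrand
  have hint : IntegrableOn (fun a => b a • f a) (Set.Icc 0 T) volume := by
    have hmeas : AEStronglyMeasurable (fun a => b a • f a)
        (volume.restrict (Set.Icc 0 T)) :=
      (hbmeas.aestronglyMeasurable).smul hfint.aestronglyMeasurable
    refine Integrable.mono' (hfint.norm.const_mul M) hmeas ?_
    filter_upwards [ae_restrict_mem measurableSet_Icc] with a ha
    rw [norm_smul]
    have : ‖b a‖ ≤ M := by rw [Real.norm_eq_abs]; exact hM a ha
    exact mul_le_mul_of_nonneg_right this (norm_nonneg _)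
  by_contra hx
  -- separate x from the open convex set `interior C`
  obtain ⟨L, hL⟩ := geometric_hahn_banach_point_open hCconvex.interior isOpen_interior hx
  have hy₀ : f T ∈ interior C := hfintC T ⟨hT, le_refl T⟩
  -- positive scalings preserve the interior
  have hscale : ∀ t : ℝ, 0 < t → ∀ y ∈ interior C, t • y ∈ interior C := by
    intro t ht y hy
    have h1 : t • y ∈ t • interior C := Set.smul_mem_smul_set hy
    rw [← interior_smul₀ ht.ne' C] at h1
    exact interior_mono (by
      rintro z ⟨w, hw, rfl⟩
      exact hCsmul w hw t ht.le) h1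
  -- L is nonzero
  have hLne : L ≠ 0 := by
    intro h
    have := hL (f T) hy₀
    simp [h] at this
  -- there is a vector with negative value of L
  obtain ⟨w, hw⟩ : ∃ w : E, L w < 0 := by
    by_contra h
    push_neg at h
    apply hLne
    ext v
    have h1 := h v
    have h2 := h (-v)
    simp only [map_neg] at h2
    simp only [ContinuousLinearMap.zero_apply]
    linarith
  -- L is strictly positive on the interior of C
  have hLpos : ∀ y ∈ interior C, 0 < L y := by
    intro y hy
    by_contra h
    push_neg at h
    -- find z in interior C with L z < 0
    have hcont : Continuous fun s : ℝ => y + s • w := by continuity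
    have hev : ∀ᶠ s : ℝ in nhds 0, y + s • w ∈ interior C := by
      have := hcont.tendsto 0
      simp only [zero_smul, add_zero] at this
      exact this (isOpen_interior.mem_nhds hy)
    obtain ⟨s, hsmem, hs0⟩ :=
      ((hev.filter_mono nhdsWithin_le_nhds).and self_mem_nhdsWithin).exists
        (f := nhdsWithin 0 (Set.Ioi 0))
    have hz : L (y + s • w) < 0 := by
      have : L (y + s • w) = L y + s * L w := by simp
      rw [this]
      nlinarith [hs0]
    set z := y + s • w
    -- scale z so that L of the scaling is below L x
    set t : ℝ := (-|L x| - 1) / L z with htdef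
    have ht : 0 < t := div_pos_of_neg_of_neg (by nlinarith [abs_nonneg (L x)]) hz
    have h1 := hL (t • z) (hscale t ht z hsmem)
    have h2 : L (t • z) = -|L x| - 1 := by
      rw [L.map_smul, smul_eq_mul, htdef, div_mul_cancel₀]
      exact hz.ne
    rw [h2] at h1
    have := neg_abs_le (L x)
    linarith
  -- L x ≤ 0 (scale a point of the interior towards 0)
  have hLx : L x ≤ 0 := by
    by_contra h
    push_neg at h
    have hy₀pos : 0 < L (f T) := hLpos _ hy₀
    set t : ℝ := L x / (2 * L (f T)) with htdef
    have ht : 0 < t := div_pos h (by linarith)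
    have h1 := hL (t • f T) (hscale t ht _ hy₀)
    have h2 : L (t • f T) = L x / 2 := by
      rw [L.map_smul, smul_eq_mul, htdef]
      field_simp
    rw [h2] at h1
    linarith
  -- L is nonnegative on C
  have hLC : ∀ y ∈ C, 0 ≤ L y := by
    intro y hy
    by_contra h
    push_neg at h
    have hy₀pos : 0 < L (f T) := hLpos _ hy₀
    set θ : ℝ := (-L y) / (L (f T) - L y) with hθdef
    have hden : 0 < L (f T) - L y := by linarith
    have hθ0 : 0 < θ := div_pos (by linarith) hden
    have hθ1 : θ < 1 := by
      rw [div_lt_one hden]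
      linarith
    have hmem := hCconvex.combo_interior_self_mem_interior hy₀ hy hθ0
      (by linarith : (0:ℝ) ≤ 1 - θ) (by ring)
    have := hLpos _ hmem
    have hval : L (θ • f T + (1 - θ) • y) = θ * L (f T) + (1 - θ) * L y := by
      simp
    rw [hval] at this
    have hzero : θ * L (f T) + (1 - θ) * L y = 0 := by
      rw [hθdef]
      field_simp
      ring
    linarith
  -- L x equals the integral of b * L ∘ f
  have hLxint : L x = ∫ a in Set.Icc 0 T, b a * L (f a) := by
    rw [hxdef, ← ContinuousLinearMap.integral_comp_comm L hint]
    simp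
  -- integrability of the real integrand
  have hgint : IntegrableOn (fun a => b a * L (f a)) (Set.Icc 0 T) volume := by
    have := L.integrable_comp hint
    refine this.congr (Filter.Eventually.of_forall fun a => ?_)
    simp
  -- the integrand is nonnegative
  have hgnonneg : ∀ a ∈ Set.Icc 0 T, 0 ≤ b a * L (f a) := fun a ha =>
    mul_nonneg (hbnonneg a ha) (hLC _ (hfC a ha))
  have hintnonneg : 0 ≤ ∫ a in Set.Icc 0 T, b a * L (f a) :=
    setIntegral_nonneg measurableSet_Icc hgnonneg
  have hinteq : ∫ a in Set.Icc 0 T, b a * L (f a) = 0 := le_antisymm (by linarith [hLxint ▸ hLx]) hintnonneg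
  -- so the integrand vanishes a.e. on [0, T]
  have hae : (fun a => b a * L (f a)) =ᵐ[volume.restrict (Set.Icc 0 T)] 0 := by
    rw [← integral_eq_zero_iff_of_nonneg_ae ?_ hgint]
    · exact hinteq
    · filter_upwards [ae_restrict_mem measurableSet_Icc] with a ha
      exact hgnonneg a ha
  -- but it is a.e. positive on (T - δ, T)
  have hsub : Set.Ioo (T - δ) T ⊆ Set.Icc 0 T := fun a ha =>
    ⟨le_of_lt (lt_of_le_of_lt (by linarith) ha.1), ha.2.le⟩
  have hae' : (fun a => b a * L (f a)) =ᵐ[volume.restrict (Set.Ioo (T - δ) T)] 0 :=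
    ae_restrict_of_ae_restrict_of_subset hsub hae
  have haepos : ∀ᵐ a ∂(volume.restrict (Set.Ioo (T - δ) T)), 0 < b a * L (f a) := by
    filter_upwards [hbposδ, ae_restrict_mem measurableSet_Ioo] with a hba ha
    have haIoc : a ∈ Set.Ioc 0 T := ⟨lt_of_le_of_lt (by linarith [ha.1]) ha.1, ha.2.le⟩
    have : a ∈ Set.Ioc 0 T := haIoc
    exact mul_pos hba (hLpos _ (hfintC a haIoc))
  have hne : volume.restrict (Set.Ioo (T - δ) T) ≠ 0 := by
    intro h
    rw [Measure.restrict_eq_zero, Real.volume_Ioo, ENNReal.ofReal_eq_zero] at h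
    linarith
  haveI : Filter.NeBot (ae (volume.restrict (Set.Ioo (T - δ) T))) := ae_neBot.mpr hne
  obtain ⟨a, h1, h2⟩ := (haepos.and hae').exists
  simp only [Pi.zero_apply] at h2
  rw [h2] at h1
  exact lt_irrefl 0 h1
end
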